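/- (Upper bound in Theorem 2.) λ_0 ≤ δ^{-1}, where δ = sup_{j∈T\{0}} μ(T_j) φ_j with φ_j = Σ_{k∈P(j)} 1/(μ_k q_{kk*}) and μ(T_j) = Σ_{k∈T_j} μ_k. -/

import Mathlib

open Finset
open scoped Classical

structure BDTree (V : Type*) [Fintype V] where
  root : V
  parent : V → V
  layer : V → ℕ
  q : V → V → ℝ
  parent_root : parent root = root
  layer_root : layer root = 0
  layer_parent : ∀ i, i ≠ root → layer i = layer (parent i) + 1
  reach : ∀ i, ∃ n, parent^[n] i = root
  q_pos_up : ∀ i, i ≠ root → 0 < q i (parent i)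
  q_pos_down : ∀ i, i ≠ root → 0 < q (parent i) i

namespace BDTree

variable {V : Type*} [Fintype V] (T : BDTree V)

/-- The set of sons of a vertex. -/
noncomputable def sons (i : V) : Finset V :=
  Finset.univ.filter fun j => j ≠ T.root ∧ T.parent j = i

/-- The subtree `T_k` rooted at `k` (including `k`). -/
noncomputable def subtree (k : V) : Finset V :=
  Finset.univ.filter fun j => ∃ n, T.parent^[n] j = k

/-- The path set `P(i)`: vertices (excluding the root) on the path from `i` to the root. -/
noncomputable def pathSet (i : V) : Finset V :=
  Finset.univ.filter fun k => k ≠ T.root ∧ ∃ n, T.parent^[n] i = k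

/-- The symmetric measure `μ`. -/
noncomputable def mu (k : V) : ℝ :=
  ∏ j ∈ T.pathSet k, T.q (T.parent j) j / T.q j (T.parent j)

/-- The operator `Ω`. -/
noncomputable def Omega (g : V → ℝ) (i : V) : ℝ :=
  (∑ j ∈ T.sons i, T.q i j * (g j - g i)) + T.q i (T.parent i) * (g (T.parent i) - g i)

/-- The set of non-root vertices `T \ {0}`. -/
noncomputable def nonroot : Finset V := Finset.univ.filter fun i => i ≠ T.root

/-- The Dirichlet form `D(f)`. -/
noncomputable def D (f : V → ℝ) : ℝ :=
  ∑ i ∈ T.nonroot, T.mu i * T.q i (T.parent i) * (f i - f (T.parent i)) ^ 2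

/-- `μ(f²)`. -/
noncomputable def norm2 (f : V → ℝ) : ℝ := ∑ i ∈ T.nonroot, T.mu i * f i ^ 2

/-- The principal Dirichlet eigenvalue `λ₀`, via the classical variational formula. -/
noncomputable def lam0 : ℝ := sInf {r | ∃ f : V → ℝ, f T.root = 0 ∧ T.norm2 f = 1 ∧ r = T.D f}

/-- The single-summation operator `I`. -/
noncomputable def opI (f : V → ℝ) (i : V) : ℝ :=
  (∑ j ∈ T.subtree i, T.mu j * f j) /
    (T.mu i * T.q i (T.parent i) * (f i - f (T.parent i)))

/-- The double-summation operator `II`. -/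
noncomputable def opII (f : V → ℝ) (i : V) : ℝ :=
  (∑ k ∈ T.pathSet i, (1 / (T.mu k * T.q k (T.parent k))) *
      ∑ j ∈ T.subtree k, T.mu j * f j) / f i

/-- The difference-form operator `R`; at a son of the root the convention `w_0 = ∞`,
`1/∞ = 0` is used, i.e. the term `w i⁻¹` is replaced by `0`. -/
noncomputable def R (w : V → ℝ) (i : V) : ℝ :=
  T.q i (T.parent i) * (1 - (if T.parent i = T.root then 0 else (w i)⁻¹)) +
    ∑ j ∈ T.sons i, T.q i j * (1 - w j)

/-- Membership in the test-function class `W = {w : w > 1, w_0 = ∞}` (the value at a son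
of the root plays the role of `∞` and is not used by `R`). -/
def memW (w : V → ℝ) : Prop := ∀ i, i ≠ T.root → T.parent i ≠ T.root → 1 < w i

/-- `φ_j = Σ_{k∈P(j)} 1/(μ_k q_{kk*})`. -/
noncomputable def phi (j : V) : ℝ :=
  ∑ k ∈ T.pathSet j, 1 / (T.mu k * T.q k (T.parent k))

end BDTree

namespace BDTree

variable {V : Type*} [Fintype V] (T : BDTree V)

lemma iterate_parent_root (n : ℕ) : T.parent^[n] T.root = T.root := by
  induction n with
  | zero => rfl
  | succ n ih => rw [Function.iterate_succ_apply', ih, T.parent_root]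

lemma layer_parent_le (j : V) : T.layer (T.parent j) ≤ T.layer j := by
  by_cases h : j = T.root
  · subst h; rw [T.parent_root]
  · rw [T.layer_parent j h]; omega

lemma layer_iterate_le (n : ℕ) (j : V) : T.layer (T.parent^[n] j) ≤ T.layer j := by
  induction n with
  | zero => exact le_refl _
  | succ n ih =>
    rw [Function.iterate_succ_apply']
    exact (T.layer_parent_le _).trans ih

lemma mem_pathSet {k i : V} : k ∈ T.pathSet i ↔ k ≠ T.root ∧ ∃ n, T.parent^[n] i = k := by
  simp [pathSet]

lemma mem_nonroot {i : V} : i ∈ T.nonroot ↔ i ≠ T.root := by simp [nonroot]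

lemma pathSet_root : T.pathSet T.root = ∅ := by
  ext k
  simp only [mem_pathSet, Finset.notMem_empty, iff_false, not_and]
  rintro hk ⟨n, hn⟩
  rw [T.iterate_parent_root] at hn
  exact hk hn.symm

lemma self_mem_pathSet {i : V} (hi : i ≠ T.root) : i ∈ T.pathSet i :=
  T.mem_pathSet.2 ⟨hi, 0, rfl⟩

lemma not_mem_pathSet_parent {i : V} (hi : i ≠ T.root) : i ∉ T.pathSet (T.parent i) := by
  rw [mem_pathSet]
  rintro ⟨-, n, hn⟩
  have h1 : T.layer (T.parent^[n] (T.parent i)) ≤ T.layer (T.parent i) := T.layer_iterate_le n _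
  rw [hn] at h1
  rw [T.layer_parent i hi] at h1
  omega

lemma pathSet_eq_insert {i : V} (hi : i ≠ T.root) :
    T.pathSet i = insert i (T.pathSet (T.parent i)) := by
  ext k
  simp only [mem_pathSet, Finset.mem_insert]
  constructor
  · rintro ⟨hk, n, hn⟩
    cases n with
    | zero => exact Or.inl hn.symm
    | succ n => exact Or.inr ⟨hk, n, by rwa [Function.iterate_succ_apply] at hn⟩
  · rintro (rfl | ⟨hk, n, hn⟩)
    · exact ⟨hi, 0, rfl⟩
    · exact ⟨hk, n + 1, by rwa [Function.iterate_succ_apply]⟩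

lemma ne_root_of_mem_pathSet {k i : V} (h : k ∈ T.pathSet i) : k ≠ T.root :=
  (T.mem_pathSet.1 h).1

lemma mu_pos (k : V) : 0 < T.mu k := by
  apply Finset.prod_pos
  intro j hj
  have hj' := T.ne_root_of_mem_pathSet hj
  exact div_pos (T.q_pos_down j hj') (T.q_pos_up j hj')

lemma coef_pos {k : V} (hk : k ≠ T.root) : 0 < 1 / (T.mu k * T.q k (T.parent k)) :=
  one_div_pos.2 (mul_pos (T.mu_pos k) (T.q_pos_up k hk))

lemma phi_pos {i : V} (hi : i ≠ T.root) : 0 < T.phi i :=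
  Finset.sum_pos (fun k hk => T.coef_pos (T.ne_root_of_mem_pathSet hk))
    ⟨i, T.self_mem_pathSet hi⟩

lemma mem_subtree {j k : V} : j ∈ T.subtree k ↔ ∃ n, T.parent^[n] j = k := by simp [subtree]

lemma self_mem_subtree (k : V) : k ∈ T.subtree k := T.mem_subtree.2 ⟨0, rfl⟩

lemma muT_pos (k : V) : 0 < ∑ j ∈ T.subtree k, T.mu j :=
  Finset.sum_pos (fun j _ => T.mu_pos j) ⟨k, T.self_mem_subtree k⟩

lemma subtree_subset_nonroot {k : V} (hk : k ≠ T.root) : T.subtree k ⊆ T.nonroot := by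
  intro j hj
  obtain ⟨n, hn⟩ := T.mem_subtree.1 hj
  rw [mem_nonroot]
  rintro rfl
  rw [T.iterate_parent_root] at hn
  exact hk hn.symm

lemma pathSet_subset_nonroot {i : V} : T.pathSet i ⊆ T.nonroot := fun k hk =>
  T.mem_nonroot.2 (T.ne_root_of_mem_pathSet hk)

lemma pathSet_subset_of_mem_subtree {j k : V} (hj : j ∈ T.subtree k) :
    T.pathSet k ⊆ T.pathSet j := by
  obtain ⟨m, hm⟩ := T.mem_subtree.1 hj
  intro x hx
  obtain ⟨hx1, n, hn⟩ := T.mem_pathSet.1 hx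
  exact T.mem_pathSet.2 ⟨hx1, n + m, by rw [Function.iterate_add_apply, hm, hn]⟩

lemma D_nonneg (f : V → ℝ) : 0 ≤ T.D f := by
  apply Finset.sum_nonneg
  intro i hi
  exact mul_nonneg (mul_nonneg (T.mu_pos i).le (T.q_pos_up i (T.mem_nonroot.1 hi)).le)
    (sq_nonneg _)

end BDTree
/-- the upper bound `λ₀ ≤ δ⁻¹` with `δ = sup_j μ(T_j) φ_j`. -/
theorem stmt13 {V : Type*} [Fintype V] (T : BDTree V) (hne : T.nonroot.Nonempty) :
    T.lam0 ≤ (T.nonroot.sup' hne fun j => (∑ k ∈ T.subtree j, T.mu k) * T.phi j)⁻¹ := by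
  classical
  obtain ⟨i0, hi0mem, hi0⟩ :=
    Finset.exists_mem_eq_sup' hne (fun j => (∑ k ∈ T.subtree j, T.mu k) * T.phi j)
  have hi0ne : i0 ≠ T.root := T.mem_nonroot.1 hi0mem
  set M : ℝ := ∑ k ∈ T.subtree i0, T.mu k with hM
  have hMpos : 0 < M := T.muT_pos i0
  have hphipos : 0 < T.phi i0 := T.phi_pos hi0ne
  set f : V → ℝ :=
    fun i => ∑ k ∈ T.pathSet i ∩ T.pathSet i0, 1 / (T.mu k * T.q k (T.parent k)) with hf
  have hfroot : f T.root = 0 := by simp [hf, T.pathSet_root]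
  have hdiff : ∀ i, i ≠ T.root → f i - f (T.parent i) =
      if i ∈ T.pathSet i0 then 1 / (T.mu i * T.q i (T.parent i)) else 0 := by
    intro i hi
    have hins := T.pathSet_eq_insert hi
    by_cases hmem : i ∈ T.pathSet i0
    · rw [if_pos hmem]
      have hinter : T.pathSet i ∩ T.pathSet i0 =
          insert i (T.pathSet (T.parent i) ∩ T.pathSet i0) := by
        rw [hins, Finset.insert_inter_of_mem hmem]
      have hnot : i ∉ T.pathSet (T.parent i) ∩ T.pathSet i0 := by
        simp [T.not_mem_pathSet_parent hi]
      rw [hf]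
      simp only
      rw [hinter, Finset.sum_insert hnot]
      ring
    · rw [if_neg hmem]
      have hinter : T.pathSet i ∩ T.pathSet i0 = T.pathSet (T.parent i) ∩ T.pathSet i0 := by
        rw [hins, Finset.insert_inter_of_notMem hmem]
      rw [hf]
      simp only [hinter, sub_self]
  have hDf : T.D f = T.phi i0 := by
    have h1 : ∀ i ∈ T.nonroot,
        T.mu i * T.q i (T.parent i) * (f i - f (T.parent i)) ^ 2 =
        if i ∈ T.pathSet i0 then 1 / (T.mu i * T.q i (T.parent i)) else 0 := by
      intro i hi
      have hiR := T.mem_nonroot.1 hi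
      rw [hdiff i hiR]
      split_ifs with h
      · field_simp [(T.mu_pos i).ne', (T.q_pos_up i hiR).ne']
      · ring
    rw [BDTree.D, Finset.sum_congr rfl h1, Finset.sum_ite_mem,
      Finset.inter_eq_right.2 T.pathSet_subset_nonroot, BDTree.phi]
  have hfsub : ∀ j ∈ T.subtree i0, f j = T.phi i0 := by
    intro j hj
    rw [hf]
    simp only
    rw [Finset.inter_eq_right.2 (T.pathSet_subset_of_mem_subtree hj)]
    rfl
  have hnorm : M * T.phi i0 ^ 2 ≤ T.norm2 f := by
    have h1 : M * T.phi i0 ^ 2 = ∑ j ∈ T.subtree i0, T.mu j * f j ^ 2 := by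
      rw [hM, Finset.sum_mul]
      exact Finset.sum_congr rfl fun j hj => by rw [hfsub j hj]
    rw [h1, BDTree.norm2]
    exact Finset.sum_le_sum_of_subset_of_nonneg (T.subtree_subset_nonroot hi0ne)
      fun j _ _ => mul_nonneg (T.mu_pos j).le (sq_nonneg _)
  set c : ℝ := T.norm2 f with hc
  have hcpos : 0 < c := lt_of_lt_of_le (mul_pos hMpos (pow_pos hphipos 2)) hnorm
  have hsq : Real.sqrt c ^ 2 = c := Real.sq_sqrt hcpos.le
  have hsqrtne : Real.sqrt c ≠ 0 := by positivity
  set g : V → ℝ := fun v => f v / Real.sqrt c with hg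
  have hnormg : T.norm2 g = 1 := by
    have h1 : ∀ j, T.mu j * g j ^ 2 = T.mu j * f j ^ 2 / c := by
      intro j
      rw [hg]
      simp only
      rw [div_pow, hsq]
      ring
    rw [BDTree.norm2, Finset.sum_congr rfl (fun j _ => h1 j), ← Finset.sum_div]
    have h2 : (∑ i ∈ T.nonroot, T.mu i * f i ^ 2) = c := rfl
    rw [h2, div_self hcpos.ne']
  have hDg : T.D g = T.phi i0 / c := by
    have h1 : ∀ i, T.mu i * T.q i (T.parent i) * (g i - g (T.parent i)) ^ 2 =
        T.mu i * T.q i (T.parent i) * (f i - f (T.parent i)) ^ 2 / c := by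
      intro i
      rw [hg]
      simp only
      rw [div_sub_div_same, div_pow, hsq]
      ring
    rw [BDTree.D, Finset.sum_congr rfl (fun i _ => h1 i), ← Finset.sum_div, ← BDTree.D, hDf]
  have hgroot : g T.root = 0 := by rw [hg]; simp [hfroot]
  have hmem : T.D g ∈ {r | ∃ f : V → ℝ, f T.root = 0 ∧ T.norm2 f = 1 ∧ r = T.D f} :=
    ⟨g, hgroot, hnormg, rfl⟩
  have hbdd : BddBelow {r | ∃ f : V → ℝ, f T.root = 0 ∧ T.norm2 f = 1 ∧ r = T.D f} := by
    refine ⟨0, ?_⟩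
    rintro r ⟨f', -, -, rfl⟩
    exact T.D_nonneg f'
  have hle : T.lam0 ≤ T.D g := csInf_le hbdd hmem
  rw [hi0]
  calc T.lam0 ≤ T.D g := hle
    _ = T.phi i0 / c := hDg
    _ ≤ T.phi i0 / (M * T.phi i0 ^ 2) := by gcongr
    _ = ((∑ k ∈ T.subtree i0, T.mu k) * T.phi i0)⁻¹ := by
        rw [← hM]
        field_simp
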